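/- Let g : [0,1) → ℝ be defined by g(y) = 1 − 8/((√((9−y)/(1−y)) + 2)² − 1). Then for every y ∈ [0,1), √((9 − g(y))/(1 − g(y))) = √((9 − y)/(1 − y)) + 2. In other words, the change of variables s(y) = √((9−y)/(1−y)) conjugates g to the translation s ↦ s + 2. -/

import Mathlib

/-- The change of variables `s(y) = √((9−y)/(1−y))` conjugates `g` to `s ↦ s + 2`. -/
theorem sqrt_ratio_g_eq_add_two (g : ℝ → ℝ)
    (hg : ∀ y ∈ Set.Ico (0 : ℝ) 1,
      g y = 1 - 8 / ((Real.sqrt ((9 - y) / (1 - y)) + 2) ^ 2 - 1)) :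
    ∀ y ∈ Set.Ico (0 : ℝ) 1,
      Real.sqrt ((9 - g y) / (1 - g y)) = Real.sqrt ((9 - y) / (1 - y)) + 2 := by
  intro y hy
  set s := Real.sqrt ((9 - y) / (1 - y)) with hs
  have hs0 : 0 ≤ s := Real.sqrt_nonneg _
  have hD : (s + 2) ^ 2 - 1 > 0 := by nlinarith
  have hkey : (9 - g y) / (1 - g y) = (s + 2) ^ 2 := by
    rw [hg y hy, ← hs]
    field_simp [hD.ne']
    ring
  rw [hkey, Real.sqrt_sq (by linarith)]
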